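/- Let 0 < μ ≤ L, β ∈ (0,1), γ ∈ (0, 2(1+β)/L), d_N, d_T ∈ ℕ, and let H ∈ ℝ^{d_N × d_N} be symmetric with μ‖v‖² ≤ ⟨v, Hv⟩ ≤ L‖v‖² for all v ∈ ℝ^{d_N}. Define the block matrix A ∈ ℝ^{(d_N + d_N + d_T) × (d_N + d_N + d_T)} by A = [[(1+β)Id_{d_N} − γH, −β Id_{d_N}, 0], [Id_{d_N}, 0, 0], [0, 0, β Id_{d_T}]]. Then the spectral radius of A satisfies ρ(A) ≤ m(γ, β), and m(γ, β) < 1. -/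

import Mathlib

open RealInnerProductSpace

/-- The convergence rate `m(γ, β)` of Polyak's heavy ball method, for `0 < μ ≤ L`,
`β ∈ (0,1)` and `γ ∈ (0, 2(1+β)/L)`. -/
noncomputable def heavyBallRate (μ L β γ : ℝ) : ℝ :=
  if (1 - Real.sqrt β) ^ 2 / μ ≤ γ ∧ γ ≤ (1 + Real.sqrt β) ^ 2 / L then Real.sqrt β
  else if γ ≤ 2 * (1 + β) / (L + μ) then
    (1 + β - γ * μ) / 2 + Real.sqrt (((1 + β - γ * μ) / 2) ^ 2 - β)
  else (γ * L - (1 + β)) / 2 + Real.sqrt (((γ * L - (1 + β)) / 2) ^ 2 - β)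



lemma conj_root {b β : ℝ} {ρ : ℂ} (hρ : ρ^2 - (b:ℂ)*ρ + (β:ℂ) = 0) (him : ρ.im ≠ 0) :
    2 * ρ.re = b ∧ Complex.normSq ρ = β := by
  have hconj : (starRingEnd ℂ ρ)^2 - (b:ℂ)*(starRingEnd ℂ ρ) + (β:ℂ) = 0 := by
    have := congrArg (starRingEnd ℂ) hρ
    simpa [map_sub, map_add, map_mul, map_pow] using this
  have hne : ρ - starRingEnd ℂ ρ ≠ 0 := by
    intro h
    rw [sub_eq_zero] at h
    have : ρ.im = -ρ.im := by
      conv_lhs => rw [h]; simp [Complex.conj_im]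
    exact him (by linarith)
  have hsum : ρ + starRingEnd ℂ ρ = (b:ℂ) := by
    have hfac : (ρ - starRingEnd ℂ ρ) * (ρ + starRingEnd ℂ ρ - (b:ℂ)) = 0 := by
      have := sub_eq_zero.mpr (hρ.trans hconj.symm)
      ring_nf at this ⊢
      linear_combination this
    rcases mul_eq_zero.mp hfac with h | h
    · exact absurd h hne
    · exact sub_eq_zero.mp h
  constructor
  · have := congrArg Complex.re hsum
    simp [Complex.add_re, Complex.conj_re] at this; linarith
  · have hprod : ρ * starRingEnd ℂ ρ = (β:ℂ) := by
      have : starRingEnd ℂ ρ = (b:ℂ) - ρ := by linear_combination hsum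
      rw [this]
      linear_combination -hρ
    rw [Complex.mul_conj] at hprod
    exact_mod_cast hprod

-- complex-discriminant case
lemma abs_root_of_disc_nonpos {b β : ℝ} {ρ : ℂ} (hβ : 0 < β) (hd : b^2 ≤ 4*β)
    (hρ : ρ^2 - (b:ℂ)*ρ + (β:ℂ) = 0) : ‖ρ‖ = Real.sqrt β := by
  by_cases him : ρ.im = 0
  · -- real root
    have hre : ρ = ((ρ.re : ℝ) : ℂ) := (Complex.ext_iff.mpr ⟨rfl, by simp [him]⟩)
    set r := ρ.re with hr
    have hreal : r^2 - b*r + β = 0 := by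
      have := hρ
      rw [hre] at this
      exact_mod_cast this
    have h1 : (r - b/2)^2 = b^2/4 - β := by ring_nf; linarith
    have h2 : (r - b/2)^2 = 0 := le_antisymm (by rw [h1]; linarith) (sq_nonneg _)
    have hrb : r = b/2 := by nlinarith [h2]
    have : r^2 = β := by nlinarith [h1, h2]
    rw [hre, Complex.norm_real, Real.norm_eq_abs, show β = r^2 from this.symm, Real.sqrt_sq_eq_abs]
  · obtain ⟨_, hns⟩ := conj_root hρ him
    rw [Complex.norm_def, hns]
lemma abs_root_of_disc_nonneg {b β : ℝ} {ρ : ℂ} (hβ : 0 < β) (hd : 4*β ≤ b^2)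
    (hρ : ρ^2 - (b:ℂ)*ρ + (β:ℂ) = 0) :
    ‖ρ‖ ≤ |b|/2 + Real.sqrt ((b/2)^2 - β) := by
  have him : ρ.im = 0 := by
    by_contra him
    obtain ⟨hsum, hns⟩ := conj_root hρ him
    have : ρ.im^2 > 0 := by positivity
    rw [Complex.normSq_apply] at hns
    rw [← hsum] at hd
    nlinarith [hns, this, hd]
  have hre : ρ = ((ρ.re : ℝ) : ℂ) := (Complex.ext_iff.mpr ⟨rfl, by simp [him]⟩)
  set r := ρ.re with hr
  have hreal : r^2 - b*r + β = 0 := by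
    have := hρ; rw [hre] at this; exact_mod_cast this
  have habs : |r|^2 - |b| * |r| + β ≤ 0 := by
    have h3 : b * r ≤ |b| * |r| := le_trans (le_abs_self _) (abs_mul b r ▸ le_rfl)
    nlinarith [sq_abs r, h3]
  have hsq : (|r| - |b|/2)^2 ≤ (b/2)^2 - β := by
    have := sq_abs b; nlinarith
  have : |r| - |b|/2 ≤ Real.sqrt ((b/2)^2 - β) := by
    calc |r| - |b|/2 ≤ |(|r| - |b|/2)| := le_abs_self _
    _ = Real.sqrt ((|r| - |b|/2)^2) := (Real.sqrt_sq_eq_abs _).symm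
    _ ≤ _ := Real.sqrt_le_sqrt hsq
  rw [hre, Complex.norm_real, Real.norm_eq_abs]
  linarith

lemma root_bound {b B β : ℝ} {ρ : ℂ} (hβ : 0 < β) (hb : |b| ≤ B) (hB : 2*Real.sqrt β ≤ B)
    (hρ : ρ^2 - (b:ℂ)*ρ + (β:ℂ) = 0) :
    ‖ρ‖ ≤ B/2 + Real.sqrt ((B/2)^2 - β) := by
  by_cases hd : 4*β ≤ b^2
  · have h1 := abs_root_of_disc_nonneg hβ hd hρ
    have h2 : (b/2)^2 - β ≤ (B/2)^2 - β := by
      have := sq_abs b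
      nlinarith [abs_nonneg b]
    have := Real.sqrt_le_sqrt h2
    calc ‖ρ‖ ≤ |b|/2 + Real.sqrt ((b/2)^2 - β) := h1
    _ ≤ B/2 + Real.sqrt ((B/2)^2 - β) := by linarith
  · push_neg at hd
    rw [abs_root_of_disc_nonpos hβ hd.le hρ]
    have := Real.sqrt_nonneg ((B/2)^2 - β)
    linarith

lemma rate_aux_lt_one {B β : ℝ} (hβ : 0 < β) (hβ1 : β < 1) (hB : 2*Real.sqrt β ≤ B) (hB1 : B < 1 + β) :
    B/2 + Real.sqrt ((B/2)^2 - β) < 1 := by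
  have h2 : 0 < 1 - B/2 := by linarith
  have : Real.sqrt ((B/2)^2 - β) < 1 - B/2 := by
    rw [Real.sqrt_lt' h2]; nlinarith
  linarith


section
variable {μ L β γ : ℝ} (hμ : 0 < μ) (hμL : μ ≤ L) (hβ0 : 0 < β) (hβ1 : β < 1)
  (hγ0 : 0 < γ) (hγ2 : γ * L < 2 * (1 + β))

-- B bound in regime 2
lemma regime2_B (hμ : 0 < μ) (hμL : μ ≤ L) (hβ0 : 0 < β) (hγ0 : 0 < γ)
    (h1 : ¬((1 - Real.sqrt β) ^ 2 / μ ≤ γ ∧ γ ≤ (1 + Real.sqrt β) ^ 2 / L))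
    (h2 : γ * (L + μ) ≤ 2 * (1 + β)) :
    2 * Real.sqrt β ≤ 1 + β - γ * μ := by
  have hL : 0 < L := lt_of_lt_of_le hμ hμL
  have hsq : Real.sqrt β ^ 2 = β := Real.sq_sqrt hβ0.le
  by_cases hc : (1 - Real.sqrt β) ^ 2 / μ ≤ γ
  · have hc2 : (1 + Real.sqrt β) ^ 2 / L < γ := by
      by_contra hc3; push_neg at hc3; exact h1 ⟨hc, hc3⟩
    have : (1 + Real.sqrt β) ^ 2 < γ * L := (div_lt_iff₀ hL).mp hc2
    nlinarith
  · push_neg at hc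
    have : γ * μ < (1 - Real.sqrt β) ^ 2 := (lt_div_iff₀ hμ).mp hc
    nlinarith

lemma regime3_B (hμ : 0 < μ) (hμL : μ ≤ L) (hβ0 : 0 < β) (hγ0 : 0 < γ)
    (h1 : ¬((1 - Real.sqrt β) ^ 2 / μ ≤ γ ∧ γ ≤ (1 + Real.sqrt β) ^ 2 / L))
    (h2 : ¬ γ * (L + μ) ≤ 2 * (1 + β)) :
    2 * Real.sqrt β ≤ γ * L - (1 + β) := by
  have hL : 0 < L := lt_of_lt_of_le hμ hμL
  have hsq : Real.sqrt β ^ 2 = β := Real.sq_sqrt hβ0.le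
  push_neg at h2
  by_cases hc : (1 - Real.sqrt β) ^ 2 / μ ≤ γ
  · have hc2 : (1 + Real.sqrt β) ^ 2 / L < γ := by
      by_contra hc3; push_neg at hc3; exact h1 ⟨hc, hc3⟩
    have : (1 + Real.sqrt β) ^ 2 < γ * L := (div_lt_iff₀ hL).mp hc2
    nlinarith
  · push_neg at hc
    have : γ * μ < (1 - Real.sqrt β) ^ 2 := (lt_div_iff₀ hμ).mp hc
    nlinarith

include hμ hμL hβ0 hβ1 hγ0 hγ2 in
lemma rate_facts : β ≤ heavyBallRate μ L β γ ∧ heavyBallRate μ L β γ < 1 := by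
  have hL : 0 < L := lt_of_lt_of_le hμ hμL
  have hLμ : 0 < L + μ := by linarith
  have hsq : Real.sqrt β ^ 2 = β := Real.sq_sqrt hβ0.le
  have hs0 : 0 ≤ Real.sqrt β := Real.sqrt_nonneg β
  have hs1 : Real.sqrt β < 1 := by nlinarith
  have hβs : β ≤ Real.sqrt β := by nlinarith
  unfold heavyBallRate
  split_ifs with h1 h2
  · exact ⟨hβs, hs1⟩
  · have h2' : γ * (L + μ) ≤ 2 * (1 + β) := (le_div_iff₀ hLμ).mp h2
    have hB := regime2_B hμ hμL hβ0 hγ0 h1 h2'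
    have hB1 : 1 + β - γ * μ < 1 + β := by nlinarith
    refine ⟨?_, rate_aux_lt_one hβ0 hβ1 hB hB1⟩
    have := Real.sqrt_nonneg (((1 + β - γ * μ) / 2) ^ 2 - β)
    linarith
  · have h2' : ¬ γ * (L + μ) ≤ 2 * (1 + β) := by
      intro hc; exact h2 ((le_div_iff₀ hLμ).mpr hc)
    have hB := regime3_B hμ hμL hβ0 hγ0 h1 h2'
    have hB1 : γ * L - (1 + β) < 1 + β := by nlinarith
    refine ⟨?_, rate_aux_lt_one hβ0 hβ1 hB hB1⟩
    have := Real.sqrt_nonneg (((γ * L - (1 + β)) / 2) ^ 2 - β)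
    linarith

include hμ hμL hβ0 hβ1 hγ0 hγ2 in
lemma rate_bound {lam : ℝ} (hlam1 : μ ≤ lam) (hlam2 : lam ≤ L) {ρ : ℂ}
    (hρ : ρ^2 - (((1 + β - γ * lam : ℝ)):ℂ)*ρ + (β:ℂ) = 0) :
    ‖ρ‖ ≤ heavyBallRate μ L β γ := by
  have hL : 0 < L := lt_of_lt_of_le hμ hμL
  have hLμ : 0 < L + μ := by linarith
  have hsq : Real.sqrt β ^ 2 = β := Real.sq_sqrt hβ0.le
  have hs0 : 0 ≤ Real.sqrt β := Real.sqrt_nonneg β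
  have hγμ : γ * μ ≤ γ * lam := by nlinarith
  have hγL : γ * lam ≤ γ * L := by nlinarith
  unfold heavyBallRate
  split_ifs with h1 h2
  · obtain ⟨ha, hb⟩ := h1
    have ha' : (1 - Real.sqrt β) ^ 2 ≤ γ * μ := (div_le_iff₀ hμ).mp ha
    have hb' : γ * L ≤ (1 + Real.sqrt β) ^ 2 := by
      rw [le_div_iff₀ hL] at hb; linarith
    have hd : (1 + β - γ * lam)^2 ≤ 4*β := by nlinarith
    exact le_of_eq (abs_root_of_disc_nonpos hβ0 hd hρ)
  · have h2' : γ * (L + μ) ≤ 2 * (1 + β) := (le_div_iff₀ hLμ).mp h2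
    have hB := regime2_B hμ hμL hβ0 hγ0 h1 h2'
    have hab : |1 + β - γ * lam| ≤ 1 + β - γ * μ := by
      rw [abs_le]; constructor <;> nlinarith
    have := root_bound hβ0 hab hB hρ
    calc ‖ρ‖ ≤ (1 + β - γ * μ)/2 + Real.sqrt (((1 + β - γ * μ)/2)^2 - β) := this
    _ = _ := rfl
  · have h2' : ¬ γ * (L + μ) ≤ 2 * (1 + β) := by
      intro hc; exact h2 ((le_div_iff₀ hLμ).mpr hc)
    have hB := regime3_B hμ hμL hβ0 hγ0 h1 h2'
    push_neg at h2'
    have hab : |1 + β - γ * lam| ≤ γ * L - (1 + β) := by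
      rw [abs_le]; constructor <;> nlinarith
    exact root_bound hβ0 hab hB hρ
end


-- coordinate form of the quadratic form bounds
lemma coord_bounds {n : ℕ} {μ L : ℝ} {H : Matrix (Fin n) (Fin n) ℝ}
    (hlow : ∀ v : EuclideanSpace ℝ (Fin n), μ * ‖v‖ ^ 2 ≤ ⟪v, Matrix.toEuclideanLin H v⟫)
    (hup : ∀ v : EuclideanSpace ℝ (Fin n), ⟪v, Matrix.toEuclideanLin H v⟫ ≤ L * ‖v‖ ^ 2)
    (a : Fin n → ℝ) :
    μ * (∑ i, a i ^ 2) ≤ ∑ i, a i * (H.mulVec a i) ∧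
      ∑ i, a i * (H.mulVec a i) ≤ L * (∑ i, a i ^ 2) := by
  set v : EuclideanSpace ℝ (Fin n) := (WithLp.equiv 2 _).symm a with hv
  have hnorm : ‖v‖ ^ 2 = ∑ i, a i ^ 2 := by
    rw [← real_inner_self_eq_norm_sq]
    simp [hv, PiLp.inner_apply, pow_two]
    rw [← pow_two, EuclideanSpace.norm_sq_eq]; simp [pow_two]
  have hinner : ⟪v, Matrix.toEuclideanLin H v⟫ = ∑ i, a i * (H.mulVec a i) := by
    simp [hv, Matrix.toEuclideanLin_apply_piLp_toLp, PiLp.inner_apply]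
    exact Finset.sum_congr rfl fun i _ => mul_comm _ _
  exact ⟨hnorm ▸ hinner ▸ hlow v, hnorm ▸ hinner ▸ hup v⟩

lemma herm_eig_bounds {n : ℕ} {μ L : ℝ} {H : Matrix (Fin n) (Fin n) ℝ} (hH : H.IsSymm)
    (hlow : ∀ v : EuclideanSpace ℝ (Fin n), μ * ‖v‖ ^ 2 ≤ ⟪v, Matrix.toEuclideanLin H v⟫)
    (hup : ∀ v : EuclideanSpace ℝ (Fin n), ⟪v, Matrix.toEuclideanLin H v⟫ ≤ L * ‖v‖ ^ 2)
    {v : Fin n → ℂ} (hv : v ≠ 0) {c : ℂ}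
    (heig : (H.map Complex.ofReal).mulVec v = c • v) :
    c.im = 0 ∧ μ ≤ c.re ∧ c.re ≤ L := by
  classical
  set a : Fin n → ℝ := fun i => (v i).re with ha
  set b : Fin n → ℝ := fun i => (v i).im with hb
  set N : ℝ := ∑ i, (a i ^ 2 + b i ^ 2) with hN
  have hN0 : 0 < N := by
    obtain ⟨i, hi⟩ := Function.ne_iff.mp hv
    refine Finset.sum_pos' (fun j _ => by positivity) ⟨i, Finset.mem_univ i, ?_⟩
    have : (v i).re ≠ 0 ∨ (v i).im ≠ 0 := by
      by_contra h; push_neg at h; exact hi (Complex.ext h.1 h.2)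
    rcases this with h | h <;> [nlinarith [sq_nonneg (b i), pow_pos (abs_pos.mpr h) 2, sq_abs (a i)];
      nlinarith [sq_nonneg (a i), pow_pos (abs_pos.mpr h) 2, sq_abs (b i)]]
  -- T = c * S
  have hT : ∑ i, (starRingEnd ℂ) (v i) * ((H.map Complex.ofReal).mulVec v i)
      = c * ∑ i, (starRingEnd ℂ) (v i) * v i := by
    rw [heig, Finset.mul_sum]
    refine Finset.sum_congr rfl fun i _ => by simp [Pi.smul_apply]; ring
  -- expand T as a double sum
  have hTexp : ∑ i, (starRingEnd ℂ) (v i) * ((H.map Complex.ofReal).mulVec v i)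
      = ∑ i, ∑ j, (starRingEnd ℂ) (v i) * ((H i j : ℂ) * v j) := by
    refine Finset.sum_congr rfl fun i _ => ?_
    rw [Matrix.mulVec, dotProduct, Finset.mul_sum]
    exact Finset.sum_congr rfl fun j _ => by simp [Matrix.map_apply]
  have hS : ∑ i, (starRingEnd ℂ) (v i) * v i = (N : ℂ) := by
    have : ∀ i, (starRingEnd ℂ) (v i) * v i = ((a i ^ 2 + b i ^ 2 : ℝ) : ℂ) := by
      intro i
      rw [mul_comm, Complex.mul_conj]
      norm_cast
      simp [Complex.normSq_apply, ha, hb]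
      ring
    rw [hN]
    push_cast
    exact Finset.sum_congr rfl fun i _ => by rw [this i]; push_cast; ring
  -- real part of double sum
  have hre : (∑ i, ∑ j, (starRingEnd ℂ) (v i) * ((H i j : ℂ) * v j)).re
      = ∑ i, ∑ j, H i j * (a i * a j + b i * b j) := by
    rw [Complex.re_sum]
    refine Finset.sum_congr rfl fun i _ => ?_
    rw [Complex.re_sum]
    refine Finset.sum_congr rfl fun j _ => ?_
    simp [Complex.mul_re, Complex.mul_im, ha, hb]
    ring
  have him : (∑ i, ∑ j, (starRingEnd ℂ) (v i) * ((H i j : ℂ) * v j)).im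
      = ∑ i, ∑ j, H i j * (a i * b j - b i * a j) := by
    rw [Complex.im_sum]
    refine Finset.sum_congr rfl fun i _ => ?_
    rw [Complex.im_sum]
    refine Finset.sum_congr rfl fun j _ => ?_
    simp [Complex.mul_re, Complex.mul_im, ha, hb]
    ring
  have him0 : ∑ i, ∑ j, H i j * (a i * b j - b i * a j) = 0 := by
    have hsymm : ∀ i j, H j i = H i j := fun i j => hH.apply i j
    have : ∑ i, ∑ j, H i j * (b i * a j) = ∑ i, ∑ j, H i j * (a i * b j) := by
      rw [Finset.sum_comm]
      refine Finset.sum_congr rfl fun i _ => Finset.sum_congr rfl fun j _ => ?_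
      rw [hsymm i j]; ring
    simp only [mul_sub, Finset.sum_sub_distrib]
    rw [this]; ring
  -- real part equals the two quadratic forms
  have hQ : ∑ i, ∑ j, H i j * (a i * a j + b i * b j)
      = (∑ i, a i * (H.mulVec a i)) + (∑ i, b i * (H.mulVec b i)) := by
    rw [← Finset.sum_add_distrib]
    refine Finset.sum_congr rfl fun i _ => ?_
    rw [Matrix.mulVec, dotProduct, Matrix.mulVec, dotProduct,
      Finset.mul_sum, Finset.mul_sum, ← Finset.sum_add_distrib]
    refine Finset.sum_congr rfl fun j _ => by ring
  have hQa := coord_bounds hlow hup a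
  have hQb := coord_bounds hlow hup b
  -- combine
  rw [hTexp, hS] at hT
  have hTre := congrArg Complex.re hT
  have hTim := congrArg Complex.im hT
  rw [hre, hQ] at hTre
  rw [him, him0] at hTim
  simp [Complex.mul_re, Complex.mul_im] at hTre hTim
  -- hTim : 0 = c.im * N  (up to arrangement)
  have hcim : c.im = 0 := by
    rcases hTim with h | h
    · exact h
    · exact absurd h hN0.ne'
  have hsum : μ * N ≤ (∑ i, a i * (H.mulVec a i)) + (∑ i, b i * (H.mulVec b i)) ∧
      (∑ i, a i * (H.mulVec a i)) + (∑ i, b i * (H.mulVec b i)) ≤ L * N := by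
    constructor
    · have := hQa.1; have := hQb.1
      rw [hN, Finset.sum_add_distrib]; nlinarith [hQa.1, hQb.1]
    · rw [hN, Finset.sum_add_distrib]; nlinarith [hQa.2, hQb.2]
  refine ⟨hcim, ?_, ?_⟩
  · nlinarith [hsum.1, hTre, hN0]
  · nlinarith [hsum.2, hTre, hN0]


/-- **Spectral radius of the linearized heavy ball recursion (discrete time).**
Let `0 < μ ≤ L`, `β ∈ (0,1)`, `γ ∈ (0, 2(1+β)/L)` and let `H` be a symmetric `dN × dN`
matrix with `μ‖v‖² ≤ ⟪v, Hv⟫ ≤ L‖v‖²` for all `v`. Then every complex eigenvalue of the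
block matrix `A = [[(1+β)Id - γH, -β Id, 0], [Id, 0, 0], [0, 0, β Id]]` (blocks of sizes
`dN`, `dN`, `dT`) has modulus at most `m(γ, β)`, i.e. `ρ(A) ≤ m(γ, β)`, and `m(γ, β) < 1`. -/
theorem heavy_ball_discrete_linearization_spectral_radius
    (μ L β γ : ℝ) (hμ : 0 < μ) (hμL : μ ≤ L)
    (hβ : β ∈ Set.Ioo (0 : ℝ) 1) (hγ : γ ∈ Set.Ioo 0 (2 * (1 + β) / L)) (dN dT : ℕ)
    (H : Matrix (Fin dN) (Fin dN) ℝ) (hH : H.IsSymm)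
    (hlow : ∀ v : EuclideanSpace ℝ (Fin dN), μ * ‖v‖ ^ 2 ≤ ⟪v, Matrix.toEuclideanLin H v⟫)
    (hup : ∀ v : EuclideanSpace ℝ (Fin dN), ⟪v, Matrix.toEuclideanLin H v⟫ ≤ L * ‖v‖ ^ 2) :
    (∀ ρ ∈ spectrum ℂ
      ((Matrix.fromBlocks
          (Matrix.fromBlocks ((1 + β) • (1 : Matrix (Fin dN) (Fin dN) ℝ) - γ • H)
            (-(β • (1 : Matrix (Fin dN) (Fin dN) ℝ)))
            (1 : Matrix (Fin dN) (Fin dN) ℝ) (0 : Matrix (Fin dN) (Fin dN) ℝ))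
          (0 : Matrix (Fin dN ⊕ Fin dN) (Fin dT) ℝ)
          (0 : Matrix (Fin dT) (Fin dN ⊕ Fin dN) ℝ)
          (β • (1 : Matrix (Fin dT) (Fin dT) ℝ))).map Complex.ofReal),
      ‖ρ‖ ≤ heavyBallRate μ L β γ) ∧
    heavyBallRate μ L β γ < 1 := by
  classical
  obtain ⟨hβ0, hβ1⟩ := hβ
  obtain ⟨hγ0, hγlt⟩ := hγ
  have hL : 0 < L := lt_of_lt_of_le hμ hμL
  have hγ2 : γ * L < 2 * (1 + β) := by
    have := (lt_div_iff₀ hL).mp hγlt; linarith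
  have hfacts := rate_facts hμ hμL hβ0 hβ1 hγ0 hγ2
  refine ⟨?_, hfacts.2⟩
  intro ρ hspec
  set Hc : Matrix (Fin dN) (Fin dN) ℂ := H.map Complex.ofReal with hHc
  set Mc : Matrix (Fin dN ⊕ Fin dN) (Fin dN ⊕ Fin dN) ℂ :=
    Matrix.fromBlocks (((1 + β : ℝ) : ℂ) • 1 - ((γ : ℝ) : ℂ) • Hc) (-(((β : ℝ) : ℂ) • 1)) 1 0
    with hMc
  set Ac : Matrix ((Fin dN ⊕ Fin dN) ⊕ Fin dT) ((Fin dN ⊕ Fin dN) ⊕ Fin dT) ℂ :=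
    Matrix.fromBlocks Mc 0 0 (((β : ℝ) : ℂ) • 1) with hAc
  have hmap : (Matrix.fromBlocks
          (Matrix.fromBlocks ((1 + β) • (1 : Matrix (Fin dN) (Fin dN) ℝ) - γ • H)
            (-(β • (1 : Matrix (Fin dN) (Fin dN) ℝ)))
            (1 : Matrix (Fin dN) (Fin dN) ℝ) (0 : Matrix (Fin dN) (Fin dN) ℝ))
          (0 : Matrix (Fin dN ⊕ Fin dN) (Fin dT) ℝ)
          (0 : Matrix (Fin dT) (Fin dN ⊕ Fin dN) ℝ)
          (β • (1 : Matrix (Fin dT) (Fin dT) ℝ))).map Complex.ofReal = Ac := by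
    ext (⟨i|i⟩|i) (⟨j|j⟩|j) <;>
      simp [hAc, hMc, hHc, Matrix.fromBlocks, Matrix.map_apply, Matrix.one_apply,
        Matrix.smul_apply, Matrix.sub_apply, apply_ite] <;>
      split_ifs <;> first | (push_cast; ring1) | tauto
  rw [hmap, spectrum.mem_iff] at hspec
  have hdet : (algebraMap ℂ _ ρ - Ac).det = 0 := by
    by_contra h
    exact hspec ((Matrix.isUnit_iff_isUnit_det _).mpr (isUnit_iff_ne_zero.mpr h))
  obtain ⟨x, hx0, hxe⟩ := (Matrix.exists_mulVec_eq_zero_iff).mpr hdet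
  have hxe' : Ac.mulVec x = ρ • x := by
    have h1 : (algebraMap ℂ _ ρ - Ac) = ρ • (1 : Matrix _ _ ℂ) - Ac := by
      rw [Algebra.algebraMap_eq_smul_one]
    rw [h1, Matrix.sub_mulVec, Matrix.smul_mulVec, Matrix.one_mulVec] at hxe
    exact (sub_eq_zero.mp hxe).symm ▸ rfl
  set y : Fin dN ⊕ Fin dN → ℂ := x ∘ Sum.inl with hy
  set w : Fin dT → ℂ := x ∘ Sum.inr with hw
  have hblock := Matrix.fromBlocks_mulVec Mc (0 : Matrix _ (Fin dT) ℂ)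
    (0 : Matrix (Fin dT) _ ℂ) (((β : ℝ) : ℂ) • 1) x
  have hweq : ∀ a, (β : ℂ) * w a = ρ * w a := by
    intro a
    have h2 := congrFun hxe' (Sum.inr a)
    rw [hAc, hblock] at h2
    simpa [Matrix.zero_mulVec, Matrix.smul_mulVec, Matrix.one_mulVec, hw] using h2
  by_cases hwz : ∀ a, w a = 0
  case neg =>
    -- eigenvalue from the β-block: ρ = β
    push_neg at hwz
    obtain ⟨a, ha⟩ := hwz
    have hρβ : ρ = (β : ℂ) := by
      have := hweq a
      exact (mul_right_cancel₀ ha this).symm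
    rw [hρβ]
    simpa [Complex.norm_real, abs_of_pos hβ0] using hfacts.1
  case pos =>
    -- eigenvalue of the heavy-ball block
    have hyz : y ≠ 0 := by
      intro hy0
      apply hx0
      funext s
      rcases s with s | s
      · exact congrFun hy0 s
      · exact hwz s
    have hMv : ∀ s, Mc.mulVec y s = ρ * y s := by
      intro s
      have h2 := congrFun hxe' (Sum.inl s)
      rw [hAc, hblock] at h2
      simpa [Matrix.zero_mulVec, hy] using h2
    have hblock2 := Matrix.fromBlocks_mulVec
      (((1 + β : ℝ) : ℂ) • 1 - ((γ : ℝ) : ℂ) • Hc) (-(((β : ℝ) : ℂ) • 1))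
      (1 : Matrix (Fin dN) (Fin dN) ℂ) (0 : Matrix (Fin dN) (Fin dN) ℂ) y
    have hueq : ∀ a, y (Sum.inl a) = ρ * y (Sum.inr a) := by
      intro a
      have h2 := hMv (Sum.inr a)
      rw [hMc, hblock2] at h2
      simpa [Matrix.zero_mulVec, Matrix.one_mulVec] using h2
    have hPeq : ∀ a, (((1 + β : ℝ)) : ℂ) * y (Sum.inl a)
        - (γ : ℂ) * Hc.mulVec (y ∘ Sum.inl) a - (β : ℂ) * y (Sum.inr a)
        = ρ * y (Sum.inl a) := by
      intro a
      have h2 := hMv (Sum.inl a)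
      rw [hMc, hblock2] at h2
      simp only [Sum.elim_inl, Pi.add_apply, Matrix.sub_mulVec, Matrix.add_mulVec,
        Matrix.neg_mulVec, Matrix.smul_mulVec, Matrix.one_mulVec, Pi.sub_apply,
        Pi.neg_apply, Pi.smul_apply, smul_eq_mul, Function.comp_apply] at h2 ⊢
      push_cast at h2 ⊢
      linear_combination h2
    have hHcu : ∀ a, Hc.mulVec (y ∘ Sum.inl) a = ρ * Hc.mulVec (y ∘ Sum.inr) a := by
      intro a
      have hcomp : y ∘ Sum.inl = ρ • (y ∘ Sum.inr) := by
        funext s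
        simp [hueq s]
      rw [hcomp, Matrix.mulVec_smul]
      simp
    have hmain : ∀ a, (γ : ℂ) * ρ * Hc.mulVec (y ∘ Sum.inr) a
        = (((1 : ℂ) + β) * ρ - β - ρ ^ 2) * y (Sum.inr a) := by
      intro a
      have h2 := hPeq a
      rw [hueq a, hHcu a] at h2
      push_cast at h2
      linear_combination (-1 : ℂ) * h2
    have hvz : (y ∘ Sum.inr) ≠ 0 := by
      intro hv0
      apply hyz
      funext s
      rcases s with s | s
      · have h4 := congrFun hv0 s
        simp only [Function.comp_apply, Pi.zero_apply] at h4
        simp [hueq s, h4]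
      · have h4 := congrFun hv0 s
        simpa using h4
    have hρ0 : ρ ≠ 0 := by
      intro h0
      apply hvz
      funext a
      have h2 := hPeq a
      rw [hueq a, hHcu a, h0] at h2
      simp only [Function.comp_apply, Pi.zero_apply]
      simp at h2
      rcases h2 with h | h
      · exact absurd (by exact_mod_cast h) hβ0.ne'
      · exact h
    have hγρ : (γ : ℂ) * ρ ≠ 0 := by
      apply mul_ne_zero _ hρ0
      exact_mod_cast hγ0.ne'
    set c : ℂ := (((1 : ℂ) + β) * ρ - β - ρ ^ 2) / ((γ : ℂ) * ρ) with hc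
    have heig : Hc.mulVec (y ∘ Sum.inr) = c • (y ∘ Sum.inr) := by
      funext a
      rw [Pi.smul_apply, smul_eq_mul, hc, div_mul_eq_mul_div, eq_div_iff hγρ,
        Function.comp_apply]
      rw [← hmain a]; ring
    obtain ⟨hcim, hcre1, hcre2⟩ := herm_eig_bounds hH hlow hup hvz heig
    have hcreal : c = ((c.re : ℝ) : ℂ) := Complex.ext rfl (by simp [hcim])
    have hquad : ρ ^ 2 - (((1 + β - γ * c.re : ℝ) : ℂ)) * ρ + (β : ℂ) = 0 := by
      have h3 : c * ((γ : ℂ) * ρ) = ((1 : ℂ) + β) * ρ - β - ρ ^ 2 :=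
        div_mul_cancel₀ _ hγρ
      rw [hcreal] at h3
      push_cast
      linear_combination h3
    exact rate_bound hμ hμL hβ0 hβ1 hγ0 hγ2 hcre1 hcre2 hquad
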